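/- Let d ≥ 1, let ι be a finite index set with a distinguished element 0, and let u, v : ι → M_d(ℂ) be families with u_0 = 1 (the identity matrix), v_0 = (1/d)·1, and the biorthogonality relation tr(v_αᴴ u_β) = δ_{αβ} for all α, β ∈ ι. Then for every α ∈ ι, tr( ρ₊ · (P_{u_α,v_α} ⊗ id)(W) ) = δ_{α0} − 1/d; in particular this coefficient equals 1 − 1/d ≥ 0 for α = 0 and equals −1/d < 0 for α ≠ 0, so the pair (ρ₊, W) is a good configuration. (Lemma 2 and its Corollary.) -/

import Mathlib

open Matrix
open scoped Kronecker BigOperators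

/-- The maximally entangled state `ρ₊ = (1/d)·∑_{j,j'} E_{jj'} ⊗ E_{jj'}` in
`M_d(ℂ) ⊗ M_d(ℂ)`, realized via the Kronecker product. -/
noncomputable def rhoPlus (d : ℕ) : Matrix (Fin d × Fin d) (Fin d × Fin d) ℂ :=
  ((d : ℂ))⁻¹ • ∑ j : Fin d, ∑ j' : Fin d,
    (Matrix.single j j' (1 : ℂ)) ⊗ₖ (Matrix.single j j' (1 : ℂ))

/-- The symmetric entanglement witness `W = 1⊗1 − d·ρ₊`. -/
noncomputable def symWitness (d : ℕ) : Matrix (Fin d × Fin d) (Fin d × Fin d) ℂ :=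
  1 - (d : ℂ) • rhoPlus d

/-- The map `P_{u,v} ⊗ id` on `M_d(ℂ) ⊗ M_d(ℂ)`, where `P_{u,v}(X) = tr(vᴴ X)·u`:
it acts as `P_{u,v}` on the first tensor (Kronecker) factor and as the identity on
the second; explicitly, on the Kronecker product `A ⊗ₖ B` it returns
`(tr(vᴴ A) • u) ⊗ₖ B`, extended by linearity to all of `M_{d²}(ℂ)`. -/
noncomputable def PuvTensorId {d : ℕ} (u v : Matrix (Fin d) (Fin d) ℂ)
    (M : Matrix (Fin d × Fin d) (Fin d × Fin d) ℂ) :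
    Matrix (Fin d × Fin d) (Fin d × Fin d) ℂ :=
  fun p q => u p.1 q.1 * ∑ a : Fin d, ∑ b : Fin d,
    (starRingEnd ℂ) (v a b) * M (a, p.2) (b, q.2)

lemma rhoPlus_apply (d : ℕ) (p q : Fin d × Fin d) :
    rhoPlus d p q
      = (d:ℂ)⁻¹ * ((if p.1 = p.2 then 1 else 0) * (if q.1 = q.2 then 1 else 0)) := by
  rcases p with ⟨a, b⟩
  rcases q with ⟨c, e⟩
  simp only [rhoPlus, Matrix.smul_apply, Matrix.sum_apply, Matrix.kroneckerMap_apply,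
    Matrix.single, Matrix.of_apply, smul_eq_mul]
  congr 1
  simp only [ite_and, mul_ite, mul_one, mul_zero, ite_mul, zero_mul, one_mul]
  by_cases hab : a = b <;> by_cases hce : c = e <;>
    simp [hab, hce, Finset.sum_ite_eq, Finset.sum_ite_eq', eq_comm]

lemma symWitness_apply (d : ℕ) (hd : (d:ℂ) ≠ 0) (a j b i : Fin d) :
    symWitness d (a, j) (b, i)
      = (if a = b then 1 else 0) * (if j = i then 1 else 0)
        - (if a = j then 1 else 0) * (if b = i then 1 else 0) := by
  simp only [symWitness, Matrix.sub_apply, Matrix.smul_apply, rhoPlus_apply, smul_eq_mul,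
    ← mul_assoc, mul_inv_cancel₀ hd, one_mul, Matrix.one_apply, Prod.mk.injEq]
  congr 1
  by_cases hab : a = b <;> by_cases hji : j = i <;> simp [hab, hji]

lemma trace_rhoPlus_mul (d : ℕ) (M : Matrix (Fin d × Fin d) (Fin d × Fin d) ℂ) :
    Matrix.trace (rhoPlus d * M) = (d:ℂ)⁻¹ * ∑ i : Fin d, ∑ j : Fin d, M (j, j) (i, i) := by
  simp only [Matrix.trace, Matrix.diag, Matrix.mul_apply, rhoPlus_apply]
  simp [Fintype.sum_prod_type, mul_ite, ite_mul, mul_zero, zero_mul, mul_one, one_mul,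
    Finset.sum_ite_eq, Finset.sum_ite_eq', Finset.mul_sum]

lemma key (d : ℕ) (hd : (d:ℂ) ≠ 0) (u v : Matrix (Fin d) (Fin d) ℂ) :
    Matrix.trace (rhoPlus d * PuvTensorId u v (symWitness d))
      = (d:ℂ)⁻¹ * (Matrix.trace u * (starRingEnd ℂ) (Matrix.trace v)
          - Matrix.trace (vᴴ * u)) := by
  have hinner : ∀ j i : Fin d,
      (∑ a : Fin d, ∑ b : Fin d, (starRingEnd ℂ) (v a b) * symWitness d (a, j) (b, i))
        = (if j = i then (starRingEnd ℂ) (Matrix.trace v) else 0)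
            - (starRingEnd ℂ) (v j i) := by
    intro j i
    by_cases hji : j = i <;>
      simp [symWitness_apply d hd, hji, mul_sub, Finset.sum_sub_distrib, mul_ite, ite_mul,
        mul_zero, zero_mul, mul_one, one_mul, Finset.sum_ite_eq, Finset.sum_ite_eq',
        Matrix.trace, Matrix.diag, map_sum]
  rw [trace_rhoPlus_mul]
  have h2 : ∀ i j : Fin d, PuvTensorId u v (symWitness d) (j, j) (i, i)
      = u j i * ((if j = i then (starRingEnd ℂ) (Matrix.trace v) else 0)
          - (starRingEnd ℂ) (v j i)) := by
    intro i j
    simp only [PuvTensorId]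
    rw [hinner]
  simp only [h2, mul_sub]
  simp only [Finset.sum_sub_distrib]
  rw [mul_sub]
  congr 1
  · simp [mul_ite, mul_zero, Finset.sum_ite_eq', Matrix.trace, Matrix.diag, Finset.sum_mul]
  · simp [Matrix.trace, Matrix.diag, Matrix.mul_apply, Matrix.conjTranspose_apply, mul_comm]


/-- **Lemma 2 and its Corollary.** For a biorthogonal family
`u, v : ι → M_d(ℂ)` with `u_0 = 1`, `v_0 = (1/d)·1` and
`tr(v_αᴴ u_β) = δ_{αβ}`, the witness coefficients in the symmetric
configuration satisfy `tr(ρ₊ · (P_{u_α,v_α} ⊗ id)(W)) = δ_{α0} − 1/d`;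
in particular this equals `1 − 1/d ≥ 0` for `α = 0` and `−1/d < 0` for
`α ≠ 0`, so the pair `(ρ₊, W)` is a good configuration. -/
theorem symmetric_configuration_is_good {ι : Type*} [Fintype ι] [DecidableEq ι]
    (d : ℕ) (hd : 1 ≤ d) (α₀ : ι)
    (u v : ι → Matrix (Fin d) (Fin d) ℂ)
    (hu0 : u α₀ = 1) (hv0 : v α₀ = ((d : ℂ))⁻¹ • 1)
    (hbi : ∀ α β, Matrix.trace ((v α)ᴴ * u β) = if α = β then 1 else 0) :
    (∀ α, Matrix.trace (rhoPlus d * PuvTensorId (u α) (v α) (symWitness d)) =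
      (if α = α₀ then 1 else 0) - 1 / (d : ℂ)) ∧
    (0 : ℝ) ≤ 1 - 1 / (d : ℝ) ∧ -(1 / (d : ℝ)) < 0 := by
  have hd0 : d ≠ 0 := by omega
  have hdc : (d : ℂ) ≠ 0 := Nat.cast_ne_zero.mpr hd0
  have hdr : (0 : ℝ) < (d : ℝ) := by exact_mod_cast Nat.pos_of_ne_zero hd0
  refine ⟨fun α => ?_, ?_, ?_⟩
  · rw [key d hdc]
    have htu : Matrix.trace (u α) = (d:ℂ) * (if α = α₀ then 1 else 0) := by
      have h := hbi α₀ α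
      rw [hv0] at h
      simp only [Matrix.conjTranspose_smul, Matrix.conjTranspose_one, Matrix.smul_mul,
        one_mul, Matrix.trace_smul, smul_eq_mul] at h
      have hstar : star ((d:ℂ)⁻¹) = (d:ℂ)⁻¹ := by
        simp [star_inv₀]
      rw [hstar] at h
      field_simp at h
      rw [h]
      by_cases hα : α = α₀ <;> simp_all [eq_comm]
    have htv : (starRingEnd ℂ) (Matrix.trace (v α)) = (if α = α₀ then 1 else 0) := by
      have h := hbi α α₀
      rw [hu0, mul_one, Matrix.trace_conjTranspose] at h
      exact h
    have htvu : Matrix.trace ((v α)ᴴ * u α) = 1 := by simpa using hbi α α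
    rw [htu, htv, htvu]
    by_cases hα : α = α₀ <;> simp [hα] <;> field_simp
  · have h1 : 1 / (d : ℝ) ≤ 1 := by
      rw [div_le_one hdr]
      exact_mod_cast hd
    linarith
  · have : 0 < 1 / (d : ℝ) := by positivity
    linarith
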